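/- For all m ≥ 1, A_{1,m} = (2m+1) ∏_{k=1}^{m}(4k-1) − ∏_{k=1}^{m}(4k+1). -/

import Mathlib

open Finset

noncomputable def A (l m : ℕ) : ℚ :=
  ((l.factorial * m.factorial : ℕ) : ℚ) / 2 ^ (m - l) *
    ∑ k ∈ Finset.Icc l m,
      (2 : ℚ) ^ k * ((2 * m - 2 * k).choose (m - k)) * ((m + k).choose m) * (k.choose l)

noncomputable def Fq (m k : ℕ) : ℚ :=
  2 ^ k * ((2 * m - 2 * k).choose (m - k)) * ((m + k).choose m)

noncomputable def Gq (m k : ℕ) : ℚ :=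
  -4 * k * (2 * (m : ℚ) + 1 - 2 * k) * 2 ^ k *
    (if k ≤ m then (catalan (m - k) : ℚ) else (-1/2)) * ((m + k).choose m)

lemma Gq_zero (m : ℕ) : Gq m 0 = 0 := by simp [Gq]

lemma step_main (m k : ℕ) (h : k ≤ m) :
    (((m : ℚ) + 1) * Fq (m + 1) k - 2 * (4 * m + 3) * Fq m k = Gq m (k + 1) - Gq m k)
    ∧ (((m : ℚ) + 1) * k * Fq (m + 1) k - 2 * (4 * m + 5) * k * Fq m k
        - 4 * ((m : ℚ) + 1) * Fq m k
        = ((k : ℚ) + 1) * Gq m (k + 1) - (k : ℚ) * Gq m k) := by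
  rcases eq_or_lt_of_le h with rfl | hlt
  · -- boundary case k = m
    simp only [Fq, Gq, if_pos (le_refl k), if_neg (show ¬ (k + 1 ≤ k) by omega)]
    have n1 : 2 * (k + 1) - 2 * k = 2 := by omega
    have n2 : k + 1 - k = 1 := by omega
    have n3 : 2 * k - 2 * k = 0 := by omega
    have n4 : k - k = 0 := by omega
    rw [n1, n2, n3, n4]
    set b : ℚ := ((k+k).choose k : ℚ) with hb
    have hm1 : ((k:ℚ)+1) ≠ 0 := by positivity
    have hsym : (k+(k+1)).choose k = (k+(k+1)).choose (k+1) := Nat.choose_symm_add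
    have f4 : ((k+1+k).choose (k+1) : ℚ) = (2*(k:ℚ)+1) * b / ((k:ℚ)+1) := by
      rw [eq_div_iff hm1, hb]
      have := congrArg (Nat.cast : ℕ → ℚ) (Nat.add_one_mul_choose_eq (k+k) k)
      have n5 : k+k+1 = k+1+k := by omega
      rw [n5] at this
      push_cast at this
      linarith
    have f5 : ((k+(k+1)).choose k : ℚ) = (2*(k:ℚ)+1) * b / ((k:ℚ)+1) := by
      rw [hsym]
      have n6 : k+(k+1) = k+1+k := by omega
      rw [n6, f4]
    rw [f4, f5]
    norm_num [catalan_zero]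
    constructor <;> (field_simp; ring)
  · obtain ⟨i, rfl⟩ : ∃ i, m = k + i + 1 := ⟨m - k - 1, by omega⟩
    simp only [Fq, Gq, if_pos (show k + 1 ≤ k + i + 1 by omega),
      if_pos (show k ≤ k + i + 1 by omega)]
    have n1 : 2 * (k + i + 1 + 1) - 2 * k = 2 * (i + 2) := by omega
    have n2 : k + i + 1 + 1 - k = i + 2 := by omega
    have n3 : 2 * (k + i + 1) - 2 * k = 2 * (i + 1) := by omega
    have n4 : k + i + 1 - k = i + 1 := by omega
    have n5 : k + i + 1 - (k + 1) = i := by omega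
    rw [n1, n2, n3, n4, n5]
    set a : ℚ := ((2*(i+1)).choose (i+1) : ℚ) with ha
    set b : ℚ := ((k+i+1+k).choose (k+i+1) : ℚ) with hb
    have hi2 : ((i:ℚ)+2) ≠ 0 := by positivity
    have hki2 : ((k:ℚ)+(i:ℚ)+2) ≠ 0 := by positivity
    have hk1 : ((k:ℚ)+1) ≠ 0 := by positivity
    have h2i1 : (2*(i:ℚ)+1) ≠ 0 := by positivity
    have f1 : ((2*(i+2)).choose (i+2) : ℚ) = 2*(2*(i:ℚ)+3) * a / ((i:ℚ)+2) := by
      rw [eq_div_iff hi2, ha]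
      have := Nat.succ_mul_centralBinom_succ (i+1)
      simp only [Nat.centralBinom] at this
      have := congrArg (Nat.cast : ℕ → ℚ) this
      push_cast at this ⊢
      have n6 : 2*(i+1+1) = 2*(i+2) := by omega
      rw [n6] at this
      linarith
    have f2 : ((catalan (i+1) : ℚ)) = a / ((i:ℚ)+2) := by
      rw [eq_div_iff hi2, ha]
      have := congrArg (Nat.cast : ℕ → ℚ) (succ_mul_catalan_eq_centralBinom (i+1))
      simp only [Nat.centralBinom] at this
      push_cast at this
      linarith
    have f3 : ((catalan i : ℚ)) = a / (2*(2*(i:ℚ)+1)) := by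
      rw [eq_div_iff (by positivity), ha]
      have h1 := congrArg (Nat.cast : ℕ → ℚ) (succ_mul_catalan_eq_centralBinom i)
      have h2 := congrArg (Nat.cast : ℕ → ℚ) (Nat.succ_mul_centralBinom_succ i)
      simp only [Nat.centralBinom] at h1 h2
      push_cast at h1 h2
      have hi1 : ((i:ℚ)+1) ≠ 0 := by positivity
      have key : ((i:ℚ)+1) * ((catalan i : ℚ) * (2*(2*(i:ℚ)+1)))
          = ((i:ℚ)+1) * ((2*(i+1)).choose (i+1) : ℚ) := by
        linear_combination 2*(2*(i:ℚ)+1)*h1 - h2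
      exact mul_left_cancel₀ hi1 key
    have f4 : ((k+i+1+1+k).choose (k+i+1+1) : ℚ)
        = (2*(k:ℚ)+(i:ℚ)+2) * b / ((k:ℚ)+(i:ℚ)+2) := by
      rw [eq_div_iff hki2, hb]
      have := congrArg (Nat.cast : ℕ → ℚ) (Nat.add_one_mul_choose_eq (k+i+1+k) (k+i+1))
      have n7 : k+i+1+k+1 = k+i+1+1+k := by omega
      rw [n7] at this
      push_cast at this
      linarith
    have f5 : ((k+i+1+(k+1)).choose (k+i+1) : ℚ) = (2*(k:ℚ)+(i:ℚ)+2) * b / ((k:ℚ)+1) := by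
      rw [eq_div_iff hk1, hb]
      have hs : (k+i+1+(k+1)).choose (k+i+1) = (k+i+1+(k+1)).choose (k+1) := by
        have : k+i+1+(k+1) = (k+i+1) + (k+1) := by omega
        rw [this, Nat.choose_symm_add]
      rw [hs]
      have := congrArg (Nat.cast : ℕ → ℚ) (Nat.add_one_mul_choose_eq (k+i+1+k) k)
      have hsym : (k+i+1+k).choose k = (k+i+1+k).choose (k+i+1) := by
        have : k+i+1+k = (k+i+1) + k := by omega
        rw [this, Nat.choose_symm_add]
      rw [hsym] at this
      have n8 : k+i+1+k+1 = k+i+1+(k+1) := by omega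
      rw [n8] at this
      push_cast at this
      linarith
    rw [f1, f2, f3, f4, f5]
    push_cast
    constructor <;> (field_simp; ring)

lemma Gq_boundary (m : ℕ) : Gq m (m + 1) = -((m : ℚ) + 1) * Fq (m + 1) (m + 1) := by
  simp only [Gq, Fq, if_neg (show ¬ (m + 1 ≤ m) by omega)]
  have n1 : 2 * (m + 1) - 2 * (m + 1) = 0 := by omega
  have n2 : m + 1 - (m + 1) = 0 := by omega
  rw [n1, n2]
  have key : (m+1+(m+1)).choose (m+1) = 2 * ((m+(m+1)).choose m) := by
    have n3 : m+1+(m+1) = (2*m+1)+1 := by omega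
    have n4 : m+(m+1) = 2*m+1 := by omega
    rw [n3, n4, Nat.choose_succ_succ' (2*m+1) m, Nat.choose_symm_half]
    omega
  rw [key]
  simp only [Nat.choose_self, Nat.cast_one]
  push_cast
  ring

noncomputable def S0 (m : ℕ) : ℚ := ∑ k ∈ Finset.range (m + 1), Fq m k
noncomputable def S1 (m : ℕ) : ℚ := ∑ k ∈ Finset.range (m + 1), (k : ℚ) * Fq m k

lemma S0_rec (m : ℕ) : ((m : ℚ) + 1) * S0 (m + 1) = 2 * (4 * m + 3) * S0 m := by
  have e : ∀ k ∈ Finset.range (m + 1),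
      ((m : ℚ) + 1) * Fq (m + 1) k - 2 * (4 * m + 3) * Fq m k = Gq m (k + 1) - Gq m k := by
    intro k hk
    exact (step_main m k (by simp only [Finset.mem_range] at hk; omega)).1
  have key := Finset.sum_congr rfl e
  rw [Finset.sum_range_sub (Gq m), Finset.sum_sub_distrib, ← Finset.mul_sum,
    ← Finset.mul_sum] at key
  rw [S0, S0, Finset.sum_range_succ]
  linear_combination key + Gq_boundary m - Gq_zero m

lemma S1_rec (m : ℕ) :
    ((m : ℚ) + 1) * S1 (m + 1) = 2 * (4 * m + 5) * S1 m + 4 * ((m : ℚ) + 1) * S0 m := by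
  have e : ∀ k ∈ Finset.range (m + 1),
      ((m : ℚ) + 1) * ((k : ℚ) * Fq (m + 1) k) - 2 * (4 * m + 5) * ((k : ℚ) * Fq m k)
        - 4 * ((m : ℚ) + 1) * Fq m k
        = ((k : ℚ) + 1) * Gq m (k + 1) - (k : ℚ) * Gq m k := by
    intro k hk
    have := (step_main m k (by simp only [Finset.mem_range] at hk; omega)).2
    linear_combination this
  have key := Finset.sum_congr rfl e
  have tel : ∑ k ∈ Finset.range (m + 1), (((k : ℚ) + 1) * Gq m (k + 1) - (k : ℚ) * Gq m k)
      = ((m : ℚ) + 1) * Gq m (m + 1) := by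
    have h := Finset.sum_range_sub (fun k => (k : ℚ) * Gq m k) (m + 1)
    push_cast at h
    simpa using h
  rw [tel, Finset.sum_sub_distrib, Finset.sum_sub_distrib, ← Finset.mul_sum, ← Finset.mul_sum,
    ← Finset.mul_sum] at key
  rw [S1, S1, Finset.sum_range_succ, S0]
  push_cast
  linear_combination key + ((m : ℚ) + 1) * Gq_boundary m

lemma C0 (m : ℕ) :
    (m.factorial : ℚ) * S0 m = 2 ^ m * ∏ k ∈ Finset.Icc 1 m, (4 * (k : ℚ) - 1) := by
  induction m with
  | zero => simp [S0, Fq]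
  | succ n ih =>
    have hrec := S0_rec n
    have hP : ∏ k ∈ Finset.Icc 1 (n + 1), (4 * (k : ℚ) - 1)
        = (∏ k ∈ Finset.Icc 1 n, (4 * (k : ℚ) - 1)) * (4 * ((n : ℚ) + 1) - 1) := by
      rw [Finset.prod_Icc_succ_top (by omega)]
      push_cast
      ring
    rw [hP, Nat.factorial_succ]
    push_cast
    linear_combination ((n.factorial : ℚ)) * hrec + 2 * (4 * (n : ℚ) + 3) * ih

lemma C1 (m : ℕ) :
    2 * (m.factorial : ℚ) * S1 m
      = 2 ^ m * ((2 * (m : ℚ) + 1) * (∏ k ∈ Finset.Icc 1 m, (4 * (k : ℚ) - 1))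
          - ∏ k ∈ Finset.Icc 1 m, (4 * (k : ℚ) + 1)) := by
  induction m with
  | zero => simp [S1]
  | succ n ih =>
    have hrec := S1_rec n
    have hP : ∏ k ∈ Finset.Icc 1 (n + 1), (4 * (k : ℚ) - 1)
        = (∏ k ∈ Finset.Icc 1 n, (4 * (k : ℚ) - 1)) * (4 * ((n : ℚ) + 1) - 1) := by
      rw [Finset.prod_Icc_succ_top (by omega)]
      push_cast
      ring
    have hQ : ∏ k ∈ Finset.Icc 1 (n + 1), (4 * (k : ℚ) + 1)
        = (∏ k ∈ Finset.Icc 1 n, (4 * (k : ℚ) + 1)) * (4 * ((n : ℚ) + 1) + 1) := by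
      rw [Finset.prod_Icc_succ_top (by omega)]
      push_cast
      ring
    rw [hP, hQ, Nat.factorial_succ]
    push_cast
    linear_combination 2 * ((n.factorial : ℚ)) * hrec + 2 * (4 * (n : ℚ) + 5) * ih
      + 8 * ((n : ℚ) + 1) * C0 n

theorem A_one (m : ℕ) (h : 1 ≤ m) :
    A 1 m = (2 * m + 1) * ∏ k ∈ Finset.Icc 1 m, (4 * (k : ℚ) - 1)
      - ∏ k ∈ Finset.Icc 1 m, (4 * (k : ℚ) + 1) := by
  have hIcc : Finset.Icc 0 m = Finset.range (m + 1) := by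
    rw [← Finset.Ico_add_one_right_eq_Icc, Finset.range_eq_Ico]
  have hins : Finset.Icc 0 m = insert 0 (Finset.Icc 1 m) := by
    ext x
    simp only [Finset.mem_Icc, Finset.mem_insert]
    omega
  have hsum : ∑ k ∈ Finset.Icc 1 m,
      (2 : ℚ) ^ k * ((2 * m - 2 * k).choose (m - k)) * ((m + k).choose m) * (k.choose 1)
      = S1 m := by
    rw [S1, ← hIcc, hins, Finset.sum_insert (by simp)]
    simp only [Nat.cast_zero, zero_mul, zero_add]
    refine Finset.sum_congr rfl fun k hk => ?_
    simp only [Fq, Nat.choose_one_right]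
    ring
  have hC1 := C1 m
  rw [A, hsum]
  have h2 : (2 : ℚ) ^ (m - 1) * 2 = 2 ^ m := by
    rw [← pow_succ]
    congr 1
    omega
  have h1 : ((Nat.factorial 1 * Nat.factorial m : ℕ) : ℚ) = (m.factorial : ℚ) := by
    simp [Nat.factorial_one]
  rw [h1]
  have h2m1 : (2 : ℚ) ^ (m - 1) ≠ 0 := by positivity
  have h2m : (2 : ℚ) ^ m ≠ 0 := by positivity
  rw [div_mul_eq_mul_div, div_eq_iff h2m1]
  have : ((2 * (m : ℚ) + 1) * (∏ k ∈ Finset.Icc 1 m, (4 * (k : ℚ) - 1))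
      - ∏ k ∈ Finset.Icc 1 m, (4 * (k : ℚ) + 1)) * 2 ^ m = 2 * (m.factorial : ℚ) * S1 m := by
    rw [hC1]; ring
  linear_combination (-(1/2) : ℚ) * this
    - (1/2) * ((2 * (m : ℚ) + 1) * (∏ k ∈ Finset.Icc 1 m, (4 * (k : ℚ) - 1))
        - ∏ k ∈ Finset.Icc 1 m, (4 * (k : ℚ) + 1)) * h2
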